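/- arXiv:0809.0445 — 2 statements merged into one kernel-verified Lean document; each statement's English description precedes it below -/
import Mathlib

section
/- Let g be a probability density on [0,∞) with survival function Ḡ, let α ∈ L²([0,∞)) satisfy ∫_0^∞ g^{1/2} α = 0, and let η ≥ 2 be an integer. Then ∫_0^∞ [g(t)^{1/2} Ḡ(t)^{η−1} α(t) + (η−1) g(t) Ḡ(t)^{η−2} ∫_t^∞ g^{1/2} α du] dt = 0. -/
open MeasureTheory Set


lemma swap_helper (f h : ℝ → ℝ)
    (hf : IntegrableOn f (Ioi 0)) (hh : IntegrableOn h (Ioi 0)) :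
    IntegrableOn (fun t => f t * ∫ s in Ioi t, h s) (Ioi 0) ∧
    ∫ t in Ioi (0:ℝ), f t * ∫ s in Ioi t, h s
      = ∫ s in Ioi (0:ℝ), (∫ t in Ioc 0 s, f t) * h s := by
  set μ := volume.restrict (Ioi (0:ℝ)) with hμ
  have hS : MeasurableSet {p : ℝ × ℝ | p.1 < p.2} :=
    measurableSet_lt measurable_fst measurable_snd
  set F : ℝ × ℝ → ℝ := {p : ℝ × ℝ | p.1 < p.2}.indicator (fun p => f p.1 * h p.2) with hF
  have hFint : Integrable F (μ.prod μ) := (hf.mul_prod hh).indicator hS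
  have key1 : ∀ t ∈ Ioi (0:ℝ), (∫ s, F (t, s) ∂μ) = f t * ∫ s in Ioi t, h s := by
    intro t ht
    have e1 : (fun s => F (t, s)) = (Ioi t).indicator (fun s => f t * h s) := by
      ext s
      by_cases hs : t < s <;> simp [hF, indicator, hs]
    rw [e1, integral_indicator measurableSet_Ioi, hμ,
      Measure.restrict_restrict measurableSet_Ioi,
      inter_eq_left.mpr (Ioi_subset_Ioi (le_of_lt ht)), integral_const_mul]
  have key2 : ∀ s ∈ Ioi (0:ℝ), (∫ t, F (t, s) ∂μ) = (∫ t in Ioc 0 s, f t) * h s := by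
    intro s hs
    have e1 : (fun t => F (t, s)) = (Iio s).indicator (fun t => f t * h s) := by
      ext t
      by_cases ht : t < s <;> simp [hF, indicator, ht]
    rw [e1, integral_indicator measurableSet_Iio, hμ,
      Measure.restrict_restrict measurableSet_Iio]
    have : Iio s ∩ Ioi 0 = Ioo 0 s := by
      rw [inter_comm, Ioi_inter_Iio]
    rw [this, integral_mul_const, integral_Ioc_eq_integral_Ioo]
  have hmarg : Integrable (fun t => ∫ s, F (t, s) ∂μ) μ := hFint.integral_prod_left
  constructor
  · exact hmarg.congr ((ae_restrict_iff' measurableSet_Ioi).mpr (Filter.Eventually.of_forall key1))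
  · have hswap : ∫ t, (∫ s, F (t, s) ∂μ) ∂μ = ∫ s, (∫ t, F (t, s) ∂μ) ∂μ :=
      integral_integral_swap hFint
    calc ∫ t in Ioi (0:ℝ), f t * ∫ s in Ioi t, h s
        = ∫ t, (∫ s, F (t, s) ∂μ) ∂μ :=
          (setIntegral_congr_fun measurableSet_Ioi (fun t ht => (key1 t ht).symm)).symm ▸ rfl
      _ = ∫ s, (∫ t, F (t, s) ∂μ) ∂μ := hswap
      _ = ∫ s in Ioi (0:ℝ), (∫ t in Ioc 0 s, f t) * h s :=
          setIntegral_congr_fun measurableSet_Ioi key2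


section Phi
variable {g : ℝ → ℝ} (hg_nonneg : ∀ t, 0 ≤ g t)
    (hg_int : IntegrableOn g (Ioi 0)) (hg_one : ∫ t in Ioi (0:ℝ), g t = 1)
include hg_nonneg hg_int

lemma phi_mono : Monotone (fun t => ∫ s in Ioc (0:ℝ) t, g s) := by
  intro a b hab
  exact setIntegral_mono_set (hg_int.mono_set Ioc_subset_Ioi_self)
    ((ae_restrict_iff' measurableSet_Ioc).mpr (Filter.Eventually.of_forall fun x _ => hg_nonneg x))
    (HasSubset.Subset.eventuallyLE (Ioc_subset_Ioc_right hab))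

omit hg_int in
lemma phi_nonneg (t : ℝ) : 0 ≤ ∫ s in Ioc (0:ℝ) t, g s :=
  setIntegral_nonneg measurableSet_Ioc fun x _ => hg_nonneg x

include hg_one in
lemma phi_le_one (t : ℝ) : (∫ s in Ioc (0:ℝ) t, g s) ≤ 1 := by
  rw [← hg_one]
  exact setIntegral_mono_set hg_int
    ((ae_restrict_iff' measurableSet_Ioi).mpr (Filter.Eventually.of_forall fun x _ => hg_nonneg x))
    (HasSubset.Subset.eventuallyLE Ioc_subset_Ioi_self)

omit hg_nonneg in
lemma phi_diff {t u : ℝ} (ht : 0 ≤ t) (htu : t ≤ u) :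
    ∫ s in Ioc t u, g s = (∫ s in Ioc (0:ℝ) u, g s) - ∫ s in Ioc (0:ℝ) t, g s := by
  have hdisj : Disjoint (Ioc (0:ℝ) t) (Ioc t u) := Ioc_disjoint_Ioc_of_le le_rfl
  have hunion : Ioc (0:ℝ) t ∪ Ioc t u = Ioc 0 u := Ioc_union_Ioc_eq_Ioc ht htu
  have := setIntegral_union hdisj measurableSet_Ioc
    (hg_int.mono_set Ioc_subset_Ioi_self)
    (hg_int.mono_set (Ioc_subset_Ioi_self.trans (Ioi_subset_Ioi ht)))
    (f := g) (μ := volume)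
  rw [hunion] at this
  linarith [this]

end Phi

lemma keyB {g : ℝ → ℝ} (hg_meas : Measurable g) (hg_nonneg : ∀ t, 0 ≤ g t)
    (hg_int : IntegrableOn g (Ioi 0)) (hg_one : ∫ t in Ioi (0:ℝ), g t = 1) (k : ℕ) :
    ∀ u, 0 < u →
      ((k:ℝ)+1) * ∫ t in Ioc (0:ℝ) u, g t * (1 - ∫ s in Ioc (0:ℝ) t, g s) ^ k
        = 1 - (1 - ∫ s in Ioc (0:ℝ) u, g s) ^ (k+1) := by
  have hΦmeas : Measurable (fun t => ∫ s in Ioc (0:ℝ) t, g s) :=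
    (phi_mono hg_nonneg hg_int).measurable
  have hΨ01 : ∀ t, 0 ≤ 1 - (∫ s in Ioc (0:ℝ) t, g s) ∧ 1 - (∫ s in Ioc (0:ℝ) t, g s) ≤ 1 :=
    fun t => ⟨by linarith [phi_le_one hg_nonneg hg_int hg_one t],
      by linarith [phi_nonneg hg_nonneg (g := g) t]⟩
  -- general bounded-integrand integrability
  have hbint : ∀ (φ : ℝ → ℝ), Measurable φ → (∀ t, ‖φ t‖ ≤ g t) → IntegrableOn φ (Ioi 0) :=
    fun φ hm hb => Integrable.mono' hg_int hm.aestronglyMeasurable (Filter.Eventually.of_forall hb)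
  induction k with
  | zero =>
    intro u hu
    simp only [Nat.cast_zero, pow_zero, mul_one, zero_add, one_mul, pow_one]
    have := phi_diff hg_int (le_refl (0:ℝ)) (le_of_lt hu) (g := g)
    simp at this
    linarith [this]
  | succ k ih =>
    intro u hu
    set x := ∫ s in Ioc (0:ℝ) u, g s with hx
    set f0 : ℝ → ℝ := fun t => g t * (1 - ∫ s in Ioc (0:ℝ) t, g s) ^ k with hf0
    have hf0m : Measurable f0 := hg_meas.mul ((measurable_const.sub hΦmeas).pow_const k)
    have hf0bd : ∀ t, ‖f0 t‖ ≤ g t := by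
      intro t
      have h1 : |1 - (∫ s in Ioc (0:ℝ) t, g s)| ≤ 1 := by
        rw [abs_le]; constructor <;> linarith [(hΨ01 t).1, (hΨ01 t).2]
      calc ‖f0 t‖ = g t * |1 - (∫ s in Ioc (0:ℝ) t, g s)| ^ k := by
            rw [hf0]; rw [Real.norm_eq_abs, abs_mul, abs_of_nonneg (hg_nonneg t), abs_pow]
        _ ≤ g t * 1 := by
            exact mul_le_mul_of_nonneg_left (pow_le_one₀ (abs_nonneg _) h1) (hg_nonneg t)
        _ = g t := mul_one _
    have hf0int : IntegrableOn f0 (Ioi 0) := hbint f0 hf0m hf0bd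
    -- indicator versions
    set ft : ℝ → ℝ := (Iic u).indicator f0 with hft
    set ht : ℝ → ℝ := (Iic u).indicator g with hht
    have hftint : IntegrableOn ft (Ioi 0) :=
      hbint ft (hf0m.indicator measurableSet_Iic)
        (fun t => le_trans (norm_indicator_le_norm_self f0 t) (hf0bd t))
    have yhtint : IntegrableOn ht (Ioi 0) :=
      hbint ht (hg_meas.indicator measurableSet_Iic)
        (fun t => le_trans (norm_indicator_le_norm_self g t)
          (by rw [Real.norm_eq_abs, abs_of_nonneg (hg_nonneg t)]))
    have inner_ht : ∀ t : ℝ, (∫ s in Ioi t, ht s) = ∫ s in Ioc t u, g s := by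
      intro t
      rw [hht, integral_indicator measurableSet_Iic,
        Measure.restrict_restrict measurableSet_Iic, inter_comm, Ioi_inter_Iic]
    have hswap := swap_helper ft ht hftint yhtint
    -- claimL
    have claimL : (∫ t in Ioi (0:ℝ), ft t * ∫ s in Ioi t, ht s)
        = ∫ t in Ioc (0:ℝ) u, f0 t * (x - ∫ s in Ioc (0:ℝ) t, g s) := by
      have e1 : ∀ t : ℝ, ft t * (∫ s in Ioi t, ht s)
          = (Iic u).indicator (fun t => f0 t * ∫ s in Ioc t u, g s) t := by
        intro t
        rw [inner_ht t, Set.indicator_mul_left, hft]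
      rw [integral_congr_ae (Filter.Eventually.of_forall e1),
        integral_indicator measurableSet_Iic,
        Measure.restrict_restrict measurableSet_Iic, inter_comm, Ioi_inter_Iic]
      refine setIntegral_congr_fun measurableSet_Ioc (fun t htt => ?_)
      rw [phi_diff hg_int (le_of_lt htt.1) htt.2]
    -- claimR
    have claimR : (∫ s in Ioi (0:ℝ), (∫ t in Ioc 0 s, ft t) * ht s)
        = ((k:ℝ)+1)⁻¹ * ((∫ s in Ioc (0:ℝ) u, g s)
            - ∫ s in Ioc (0:ℝ) u, g s * (1 - ∫ r in Ioc (0:ℝ) s, g r) ^ (k+1)) := by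
      have e1 : ∀ s : ℝ, (∫ t in Ioc 0 s, ft t) * ht s
          = (Iic u).indicator (fun s => (∫ t in Ioc 0 s, ft t) * g s) s := by
        intro s
        rw [hht, Set.indicator_mul_right]
      rw [integral_congr_ae (Filter.Eventually.of_forall e1),
        integral_indicator measurableSet_Iic,
        Measure.restrict_restrict measurableSet_Iic, inter_comm, Ioi_inter_Iic]
      have e2 : ∀ s ∈ Ioc (0:ℝ) u, (∫ t in Ioc 0 s, ft t) * g s
          = ((k:ℝ)+1)⁻¹ * (g s - g s * (1 - ∫ r in Ioc (0:ℝ) s, g r) ^ (k+1)) := by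
        intro s hs
        have e3 : (∫ t in Ioc (0:ℝ) s, ft t) = ∫ t in Ioc (0:ℝ) s, f0 t := by
          rw [hft, integral_indicator measurableSet_Iic,
            Measure.restrict_restrict measurableSet_Iic]
          have : Iic u ∩ Ioc (0:ℝ) s = Ioc 0 s :=
            inter_eq_right.mpr (fun y hy => le_trans hy.2 hs.2)
          rw [this]
        have e4 := ih s hs.1
        have hk1 : ((k:ℝ)+1) ≠ 0 := by positivity
        rw [e3]
        have : (∫ t in Ioc (0:ℝ) s, f0 t)
            = ((k:ℝ)+1)⁻¹ * (1 - (1 - ∫ r in Ioc (0:ℝ) s, g r) ^ (k+1)) := by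
          rw [hf0]
          field_simp
          linarith [e4]
        rw [this]; ring
      rw [setIntegral_congr_fun measurableSet_Ioc e2, integral_const_mul, integral_sub
        (hg_int.mono_set Ioc_subset_Ioi_self)
        ((hbint (fun t => g t * (1 - ∫ s in Ioc (0:ℝ) t, g s) ^ (k+1)) (hg_meas.mul ((measurable_const.sub hΦmeas).pow_const (k+1)))
          (fun t => by
            have h1 : |1 - (∫ s in Ioc (0:ℝ) t, g s)| ≤ 1 := by
              rw [abs_le]; constructor <;> linarith [(hΨ01 t).1, (hΨ01 t).2]
            calc ‖g t * (1 - ∫ s in Ioc (0:ℝ) t, g s) ^ (k+1)‖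
                = g t * |1 - (∫ s in Ioc (0:ℝ) t, g s)| ^ (k+1) := by
                  rw [Real.norm_eq_abs, abs_mul, abs_of_nonneg (hg_nonneg t), abs_pow]
              _ ≤ g t * 1 := mul_le_mul_of_nonneg_left (pow_le_one₀ (abs_nonneg _) h1) (hg_nonneg t)
              _ = g t := mul_one _)).mono_set Ioc_subset_Ioi_self)]
    -- main split
    have int_b : IntegrableOn (fun t => f0 t * (x - ∫ s in Ioc (0:ℝ) t, g s)) (Ioc 0 u) := by
      refine ((hbint _ (hf0m.mul (measurable_const.sub hΦmeas)) (fun t => ?_)).mono_set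
        Ioc_subset_Ioi_self)
      have h1x : (0:ℝ) ≤ x := by rw [hx]; exact phi_nonneg hg_nonneg u
      have h2x : x ≤ 1 := by rw [hx]; exact phi_le_one hg_nonneg hg_int hg_one u
      have h2 : |x - ∫ s in Ioc (0:ℝ) t, g s| ≤ 1 := by
        rw [abs_le]
        constructor <;>
          [linarith [phi_le_one hg_nonneg hg_int hg_one t];
           linarith [phi_nonneg hg_nonneg (g := g) t]]
      calc ‖f0 t * (x - ∫ s in Ioc (0:ℝ) t, g s)‖
          = ‖f0 t‖ * |x - ∫ s in Ioc (0:ℝ) t, g s| := by rw [norm_mul, Real.norm_eq_abs, Real.norm_eq_abs]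
        _ ≤ g t * 1 := mul_le_mul (hf0bd t) h2 (abs_nonneg _)
            (le_trans (norm_nonneg _) (hf0bd t))
        _ = g t := mul_one _
    have mainsplit : (∫ t in Ioc (0:ℝ) u, g t * (1 - ∫ s in Ioc (0:ℝ) t, g s) ^ (k+1))
        = (1 - x) * (∫ t in Ioc (0:ℝ) u, f0 t)
          + ∫ t in Ioc (0:ℝ) u, f0 t * (x - ∫ s in Ioc (0:ℝ) t, g s) := by
      have e1 : ∀ t ∈ Ioc (0:ℝ) u, g t * (1 - ∫ s in Ioc (0:ℝ) t, g s) ^ (k+1)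
          = (1 - x) * f0 t + f0 t * (x - ∫ s in Ioc (0:ℝ) t, g s) := by
        intro t htt
        rw [hf0, pow_succ]; ring
      rw [setIntegral_congr_fun measurableSet_Ioc e1,
        integral_add ((hf0int.mono_set Ioc_subset_Ioi_self).const_mul _) int_b,
        integral_const_mul]
    -- combine
    have E3 : ((k:ℝ)+1) * (∫ t in Ioc (0:ℝ) u, f0 t * (x - ∫ s in Ioc (0:ℝ) t, g s))
        = (∫ s in Ioc (0:ℝ) u, g s)
          - ∫ s in Ioc (0:ℝ) u, g s * (1 - ∫ r in Ioc (0:ℝ) s, g r) ^ (k+1) := by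
      have hk1 : ((k:ℝ)+1) ≠ 0 := by positivity
      have := claimL.symm.trans (hswap.2.trans claimR)
      field_simp at this ⊢
      linarith [this]
    have E2 := ih u hu
    push_cast
    rw [show ((1:ℝ) - x) ^ (k+1+1) = (1 - x) ^ (k+1) * (1-x) from pow_succ _ _]
    have E1 := mainsplit
    rw [hf0] at E1 E2 E3
    linear_combination ((k:ℝ)+1) * E1 + (1-x) * E2 + E3

theorem BstarA_integration_by_parts
    (g : ℝ → ℝ) (hg_meas : Measurable g) (hg_nonneg : ∀ t, 0 ≤ g t)
    (hg_int : IntegrableOn g (Ioi 0))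
    (hg_one : ∫ t in Ioi (0:ℝ), g t = 1)
    (G : ℝ → ℝ) (hG : ∀ t, G t = ∫ u in Ioi t, g u)
    (α : ℝ → ℝ) (hα_meas : Measurable α)
    (hα_L2 : MemLp α 2 (volume.restrict (Ioi (0:ℝ))))
    (h_orth : ∫ t in Ioi (0:ℝ), Real.sqrt (g t) * α t = 0)
    (η : ℕ) (hη : 2 ≤ η) :
    ∫ t in Ioi (0:ℝ),
      (Real.sqrt (g t) * G t ^ (η - 1) * α t
        + ((η : ℝ) - 1) * g t * G t ^ (η - 2) * ∫ u in Ioi t, Real.sqrt (g u) * α u)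
      = 0 := by
  obtain ⟨k, rfl⟩ : ∃ k, η = k + 2 := ⟨η - 2, by omega⟩
  have hΦmeas : Measurable (fun t => ∫ s in Ioc (0:ℝ) t, g s) :=
    (phi_mono hg_nonneg hg_int).measurable
  have hΨ01 : ∀ t, 0 ≤ 1 - (∫ s in Ioc (0:ℝ) t, g s) ∧ 1 - (∫ s in Ioc (0:ℝ) t, g s) ≤ 1 :=
    fun t => ⟨by linarith [phi_le_one hg_nonneg hg_int hg_one t],
      by linarith [phi_nonneg hg_nonneg (g := g) t]⟩
  have hΨabs : ∀ t, |1 - (∫ s in Ioc (0:ℝ) t, g s)| ≤ 1 := by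
    intro t; rw [abs_le]; constructor <;> linarith [(hΨ01 t).1, (hΨ01 t).2]
  have hGΦ : ∀ t : ℝ, 0 ≤ t → G t = 1 - ∫ s in Ioc (0:ℝ) t, g s := by
    intro t ht
    rw [hG t]
    have hdisj : Disjoint (Ioc (0:ℝ) t) (Ioi t) := by
      refine disjoint_left.mpr (fun y hy1 hy2 => ?_)
      exact absurd hy2 (not_lt.mpr hy1.2).elim
    have hunion : Ioc (0:ℝ) t ∪ Ioi t = Ioi 0 := Ioc_union_Ioi_eq_Ioi ht
    have hsum := setIntegral_union hdisj measurableSet_Ioi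
      (hg_int.mono_set Ioc_subset_Ioi_self) (hg_int.mono_set (Ioi_subset_Ioi ht))
      (f := g) (μ := volume)
    rw [hunion, hg_one] at hsum
    linarith
  -- integrability of h := √g · α
  have hh_meas : Measurable (fun t => Real.sqrt (g t) * α t) :=
    (Real.continuous_sqrt.measurable.comp hg_meas).mul hα_meas
  have hα2 : IntegrableOn (fun t => α t ^ 2) (Ioi 0) :=
    (memLp_two_iff_integrable_sq hα_L2.aestronglyMeasurable).mp hα_L2
  have hh_int : IntegrableOn (fun t => Real.sqrt (g t) * α t) (Ioi 0) := by
    have hbd : IntegrableOn (fun t => (g t + α t ^ 2) / 2) (Ioi 0) := by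
      exact (hg_int.add hα2).div_const 2
    refine Integrable.mono' hbd hh_meas.aestronglyMeasurable
      (Filter.Eventually.of_forall fun t => ?_)
    have h1 : ‖Real.sqrt (g t) * α t‖ = Real.sqrt (g t) * |α t| := by
      rw [Real.norm_eq_abs, abs_mul, abs_of_nonneg (Real.sqrt_nonneg _)]
    have h2 : Real.sqrt (g t) ^ 2 = g t := Real.sq_sqrt (hg_nonneg t)
    rw [h1]
    nlinarith [sq_nonneg (Real.sqrt (g t) - |α t|), sq_abs (α t), Real.sqrt_nonneg (g t),
      abs_nonneg (α t)]
  -- integrability of f := (k+1) g Ψ^k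
  have hf_meas : Measurable (fun t => ((k:ℝ)+1) * (g t * (1 - ∫ s in Ioc (0:ℝ) t, g s) ^ k)) :=
    (measurable_const.mul (hg_meas.mul ((measurable_const.sub hΦmeas).pow_const k)))
  have hf_int : IntegrableOn
      (fun t => ((k:ℝ)+1) * (g t * (1 - ∫ s in Ioc (0:ℝ) t, g s) ^ k)) (Ioi 0) := by
    refine Integrable.mono' (hg_int.const_mul ((k:ℝ)+1)) hf_meas.aestronglyMeasurable
      (Filter.Eventually.of_forall fun t => ?_)
    have hb : ‖g t * (1 - ∫ s in Ioc (0:ℝ) t, g s) ^ k‖ ≤ g t := by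
      rw [Real.norm_eq_abs, abs_mul, abs_of_nonneg (hg_nonneg t), abs_pow]
      calc g t * |1 - ∫ s in Ioc (0:ℝ) t, g s| ^ k ≤ g t * 1 :=
            mul_le_mul_of_nonneg_left (pow_le_one₀ (abs_nonneg _) (hΨabs t)) (hg_nonneg t)
        _ = g t := mul_one _
    calc ‖((k:ℝ)+1) * (g t * (1 - ∫ s in Ioc (0:ℝ) t, g s) ^ k)‖
        = ((k:ℝ)+1) * ‖g t * (1 - ∫ s in Ioc (0:ℝ) t, g s) ^ k‖ := by
          rw [norm_mul, Real.norm_eq_abs (((k:ℝ)+1)), abs_of_nonneg (by positivity)]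
      _ ≤ ((k:ℝ)+1) * g t := mul_le_mul_of_nonneg_left hb (by positivity)
  obtain ⟨hBint, hswap⟩ := swap_helper _ _ hf_int hh_int
  -- first summand integrability
  have int1 : IntegrableOn
      (fun t => (1 - ∫ s in Ioc (0:ℝ) t, g s) ^ (k+1) * (Real.sqrt (g t) * α t)) (Ioi 0) := by
    refine Integrable.mono' hh_int.norm
      (((measurable_const.sub hΦmeas).pow_const (k+1)).mul hh_meas).aestronglyMeasurable
      (Filter.Eventually.of_forall fun t => ?_)
    rw [norm_mul]
    calc ‖(1 - ∫ s in Ioc (0:ℝ) t, g s) ^ (k+1)‖ * ‖Real.sqrt (g t) * α t‖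
        ≤ 1 * ‖Real.sqrt (g t) * α t‖ := by
          refine mul_le_mul_of_nonneg_right ?_ (norm_nonneg _)
          rw [Real.norm_eq_abs, abs_pow]
          exact pow_le_one₀ (abs_nonneg _) (hΨabs t)
      _ = ‖Real.sqrt (g t) * α t‖ := one_mul _
  -- rewrite integrand on Ioi 0
  have eL : ∀ t ∈ Ioi (0:ℝ),
      (Real.sqrt (g t) * G t ^ (k + 2 - 1) * α t
        + ((↑(k+2) : ℝ) - 1) * g t * G t ^ (k + 2 - 2) * ∫ u in Ioi t, Real.sqrt (g u) * α u)
      = (1 - ∫ s in Ioc (0:ℝ) t, g s) ^ (k+1) * (Real.sqrt (g t) * α t)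
        + (((k:ℝ)+1) * (g t * (1 - ∫ s in Ioc (0:ℝ) t, g s) ^ k))
            * ∫ s in Ioi t, Real.sqrt (g s) * α s := by
    intro t ht
    rw [hGΦ t (le_of_lt ht)]
    have e2 : (k + 2 - 1 : ℕ) = k + 1 := by omega
    have e3 : (k + 2 - 2 : ℕ) = k := by omega
    rw [e2, e3]
    push_cast
    ring
  rw [setIntegral_congr_fun measurableSet_Ioi eL, integral_add int1 hBint, hswap]
  -- compute swapped integral
  have hRHS : (∫ s in Ioi (0:ℝ),
        (∫ t in Ioc 0 s, ((k:ℝ)+1) * (g t * (1 - ∫ r in Ioc (0:ℝ) t, g r) ^ k))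
          * (Real.sqrt (g s) * α s))
      = - ∫ s in Ioi (0:ℝ), (1 - ∫ r in Ioc (0:ℝ) s, g r) ^ (k+1)
          * (Real.sqrt (g s) * α s) := by
    have e1 : ∀ s ∈ Ioi (0:ℝ),
        (∫ t in Ioc 0 s, ((k:ℝ)+1) * (g t * (1 - ∫ r in Ioc (0:ℝ) t, g r) ^ k))
          * (Real.sqrt (g s) * α s)
        = Real.sqrt (g s) * α s
          - (1 - ∫ r in Ioc (0:ℝ) s, g r) ^ (k+1) * (Real.sqrt (g s) * α s) := by
      intro s hs
      rw [integral_const_mul, keyB hg_meas hg_nonneg hg_int hg_one k s hs]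
      ring
    rw [setIntegral_congr_fun measurableSet_Ioi e1, integral_sub hh_int int1, h_orth]
    ring
  rw [hRHS]
  ring
end

section
/- Let h be a probability density on ℝ, m ≥ 1 an integer, and β ∈ L²(ℝ) with ∫ h^{1/2} β = 0. Define the operator T on functions of (z_1,…,z_m) by (Tβ)(z) = m h(z)^{1/2} ∫_{ℝ^{m−1}} ∏_{l=2}^m h(z_l) (h(z)^{−1/2} β(z) + ∑_{k=2}^m h(z_k)^{−1/2} β(z_k)) dz_2⋯dz_m. Then (Tβ)(z) = m β(z) for almost every z. -/
open MeasureTheory Set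

theorem BstarB_eq_m_id
    (h : ℝ → ℝ) (hh_meas : Measurable h) (hh_nonneg : ∀ z, 0 ≤ h z)
    (hh_int : Integrable h) (hh_one : ∫ z, h z = 1)
    (β : ℝ → ℝ) (hβ_meas : Measurable β) (hβ_L2 : MemLp β 2 (volume : Measure ℝ))
    (h_orth : ∫ z, Real.sqrt (h z) * β z = 0)
    (m : ℕ) (hm : 1 ≤ m)
    (T : ℝ → ℝ)
    (hT : ∀ z, T z = (m : ℝ) *
        ∫ y : Fin (m - 1) → ℝ,
          (β z * ∏ l : Fin (m - 1), h (y l)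
            + Real.sqrt (h z) *
              ∑ k : Fin (m - 1),
                Real.sqrt (h (y k)) * β (y k) * ∏ l ∈ Finset.univ.erase k, h (y l))) :
    ∀ᵐ z : ℝ, T z = (m : ℝ) * β z := by
  -- √h is in L²
  have hsqrt_meas : Measurable fun t => Real.sqrt (h t) := hh_meas.sqrt
  have hsqrt : MemLp (fun t => Real.sqrt (h t)) 2 (volume : Measure ℝ) := by
    rw [memLp_two_iff_integrable_sq hsqrt_meas.aestronglyMeasurable]
    have : (fun x => Real.sqrt (h x) ^ 2) = h := by
      funext x; exact Real.sq_sqrt (hh_nonneg x)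
    rw [this]; exact hh_int
  -- √h · β is integrable
  have hg : Integrable (fun t => Real.sqrt (h t) * β t) := by
    rw [← memLp_one_iff_integrable]
    have := hβ_L2.smul (r := 1) hsqrt
    simpa [smul_eq_mul, Pi.mul_def] using this
  set F : Fin (m - 1) → Fin (m - 1) → ℝ → ℝ :=
    fun k l t => if l = k then Real.sqrt (h t) * β t else h t with hFdef
  have hF_int : ∀ k l, Integrable (F k l) := by
    intro k l
    by_cases hlk : l = k <;> simp [hFdef, hlk, hg, hh_int]
  have hF_eq : ∀ (k : Fin (m - 1)) (y : Fin (m - 1) → ℝ),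
      Real.sqrt (h (y k)) * β (y k) * ∏ l ∈ Finset.univ.erase k, h (y l)
        = ∏ l, F k l (y l) := by
    intro k y
    rw [← Finset.mul_prod_erase Finset.univ (fun l => F k l (y l)) (Finset.mem_univ k)]
    have h1 : F k k (y k) = Real.sqrt (h (y k)) * β (y k) := by simp [hFdef]
    have h2 : ∏ l ∈ Finset.univ.erase k, h (y l)
        = ∏ l ∈ Finset.univ.erase k, F k l (y l) :=
      Finset.prod_congr rfl fun l hl => by
        simp [hFdef, Finset.ne_of_mem_erase hl]
    rw [h1, h2]
  have hP : Integrable (fun y : Fin (m - 1) → ℝ => ∏ l, h (y l)) :=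
    Integrable.fintype_prod (fun _ => hh_int)
  have hFk : ∀ k, Integrable (fun y : Fin (m - 1) → ℝ => ∏ l, F k l (y l)) :=
    fun k => Integrable.fintype_prod_dep (fun l => hF_int k l)
  have hFk_zero : ∀ k, (∫ y : Fin (m - 1) → ℝ, ∏ l, F k l (y l)) = 0 := by
    intro k
    rw [MeasureTheory.integral_fintype_prod_volume_eq_prod]
    refine Finset.prod_eq_zero (Finset.mem_univ k) ?_
    simpa [hFdef] using h_orth
  refine Filter.Eventually.of_forall fun z => ?_
  rw [hT z]
  congr 1
  calc
    ∫ y : Fin (m - 1) → ℝ,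
        (β z * ∏ l : Fin (m - 1), h (y l)
          + Real.sqrt (h z) *
            ∑ k : Fin (m - 1),
              Real.sqrt (h (y k)) * β (y k) * ∏ l ∈ Finset.univ.erase k, h (y l))
      = ∫ y : Fin (m - 1) → ℝ,
        (β z * ∏ l : Fin (m - 1), h (y l)
          + Real.sqrt (h z) * ∑ k : Fin (m - 1), ∏ l, F k l (y l)) := by
          simp_rw [hF_eq]
    _ = β z := by
      rw [integral_add (hP.const_mul _)
          ((integrable_finset_sum _ fun k _ => hFk k).const_mul _),
        integral_const_mul, integral_const_mul,
        MeasureTheory.integral_fintype_prod_volume_eq_pow, hh_one, one_pow, mul_one,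
        integral_finset_sum _ fun k _ => hFk k]
      simp [hFk_zero]
end
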